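/- Let p be an odd prime, A, B integers with p ∤ B and Δ = A²−4B. Then p divides u_{p−(Δ/p)}(A,B), where (Δ/p) is the Legendre symbol. -/

import Mathlib

/-- Lucas sequence `u n (A, B)`: `u 0 = 0`, `u 1 = 1`, `u (n+2) = A * u (n+1) - B * u n`. -/
def lucasU (A B : ℤ) : ℕ → ℤ
  | 0 => 0
  | 1 => 1
  | n + 2 => A * lucasU A B (n + 1) - B * lucasU A B n

/-- Companion Lucas sequence `v n (A, B)`: `v 0 = 2`, `v 1 = A`, `v (n+2) = A * v (n+1) - B * v n`. -/
def lucasV (A B : ℤ) : ℕ → ℤ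
  | 0 => 2
  | 1 => A
  | n + 2 => A * lucasV A B (n + 1) - B * lucasV A B n

open Polynomial AdjoinRoot

lemma lucasU_pow {S : Type*} [CommRing S] (A B : ℤ) (α : S)
    (h : α ^ 2 = (A : S) * α - (B : S)) :
    ∀ n : ℕ, α ^ (n + 1) = (lucasU A B (n + 1) : S) * α - (B : S) * (lucasU A B n : S)
  | 0 => by simp [lucasU]
  | n + 1 => by
    have ih := lucasU_pow A B α h n
    have h2 : α ^ (n + 2) = α ^ (n + 1) * α := by ring
    rw [h2, ih, show lucasU A B (n+2) = A * lucasU A B (n+1) - B * lucasU A B n from rfl]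
    push_cast
    linear_combination (lucasU A B (n+1) : S) * h

lemma coeff_ext {K : Type*} [Field K] (a b c d : K)
    (h : AdjoinRoot.of (X^2 - C a * X + C b) c * AdjoinRoot.root (X^2 - C a * X + C b)
        + AdjoinRoot.of (X^2 - C a * X + C b) d = 0) : c = 0 ∧ d = 0 := by
  set q : K[X] := X^2 - C a * X + C b with hq
  have hdeg : q.degree = 2 := by unfold q; compute_degree!
  have h' : AdjoinRoot.mk q (C c * X + C d) = 0 := by
    rw [map_add, map_mul, AdjoinRoot.mk_C, AdjoinRoot.mk_C, AdjoinRoot.mk_X]; exact h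
  have hdvd : q ∣ C c * X + C d := AdjoinRoot.mk_eq_zero.mp h'
  have hz : C c * X + C d = 0 := by
    apply Polynomial.eq_zero_of_dvd_of_degree_lt hdvd
    rw [hdeg]
    calc (C c * X + C d).degree ≤ (1 : WithBot ℕ) := by compute_degree
    _ < 2 := by decide
  constructor
  · have := congrArg (fun f => Polynomial.coeff f 1) hz
    simpa using this
  · have := congrArg (fun f => Polynomial.coeff f 0) hz
    simpa using this

lemma two_ne_zero_zmod (p : ℕ) [Fact p.Prime] (hp2 : p ≠ 2) : (2 : ZMod p) ≠ 0 := by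
  intro h
  have h2 : ((2 : ℕ) : ZMod p) = 0 := by exact_mod_cast h
  have := (ZMod.natCast_eq_zero_iff 2 p).mp h2
  have := (Nat.prime_dvd_prime_iff_eq (Fact.out : p.Prime) Nat.prime_two).mp this
  exact hp2 this

lemma key (A B : ℤ) (p : ℕ) [Fact p.Prime] (hp2 : p ≠ 2) :
    (lucasU A B p : ZMod p) = (legendreSym p (A^2 - 4*B) : ZMod p) ∧
    2 * (B : ZMod p) * (lucasU A B (p-1) : ZMod p)
      = ((legendreSym p (A^2 - 4*B) : ZMod p) - 1) * (A : ZMod p) := by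
  have hp := (Fact.out : p.Prime)
  set ℓ : ℤ := legendreSym p (A^2 - 4*B) with hℓ
  set a : ZMod p := (A : ZMod p) with ha
  set b : ZMod p := (B : ZMod p) with hb
  set q : (ZMod p)[X] := X^2 - C a * X + C b with hq
  have hdeg : q.degree = 2 := by unfold q; compute_degree!
  haveI hnt : Nontrivial (AdjoinRoot q) := AdjoinRoot.nontrivial q (by rw [hdeg]; decide)
  haveI hchar : CharP (AdjoinRoot q) p := charP_of_injective_algebraMap' (ZMod p) _
  set R := AdjoinRoot q
  set α : R := AdjoinRoot.root q with hαdef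
  have hroot : Polynomial.eval₂ (AdjoinRoot.of q) α q = 0 := AdjoinRoot.eval₂_root q
  have hcastA : AdjoinRoot.of q a = (A : R) := map_intCast (AdjoinRoot.of q) A
  have hcastB : AdjoinRoot.of q b = (B : R) := map_intCast (AdjoinRoot.of q) B
  have hα : α^2 = (A : R) * α - (B : R) := by
    have h0 : Polynomial.eval₂ (AdjoinRoot.of q) α (X^2 - C a * X + C b) = 0 := hroot
    simp only [eval₂_add, eval₂_sub, eval₂_pow, eval₂_mul, eval₂_X, eval₂_C] at h0
    rw [hcastA, hcastB] at h0
    linear_combination h0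
  -- the square root of the discriminant
  set s : R := 2 * α - (A : R) with hs
  have hs2 : s^2 = ((A^2 - 4*B : ℤ) : R) := by
    push_cast
    rw [Int.cast_mul]
    rw [hs]
    linear_combination 4 * hα
  obtain ⟨k, hk⟩ := hp.odd_of_ne_two hp2
  have hk2 : p / 2 = k := by omega
  have hpow_int : ∀ m : ℤ, ((m : ZMod p) : R) = (m : R) := fun m => map_intCast (AdjoinRoot.of q) m
  have hΔpow : (((A^2 - 4*B : ℤ) : R)) ^ k = (ℓ : R) := by
    have h1 : ((A^2 - 4*B : ℤ) : ZMod p) ^ (p/2) = ((ℓ : ℤ) : ZMod p) :=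
      (legendreSym.eq_pow p (A^2-4*B)).symm
    rw [hk2] at h1
    calc (((A^2 - 4*B : ℤ) : R)) ^ k = AdjoinRoot.of q (((A^2 - 4*B : ℤ) : ZMod p) ^ k) := by
          rw [map_pow, hpow_int]
      _ = (ℓ : R) := by rw [h1, hpow_int]
  have hsp : s ^ p = (ℓ : R) * s := by
    have h1 : s ^ p = s ^ (2*k+1) := congrArg (fun n => s ^ n) hk
    calc s ^ p = (s^2)^k * s := by rw [h1, pow_succ, pow_mul]
      _ = (ℓ : R) * s := by rw [hs2, hΔpow]
  have hAp : (A : R) ^ p = (A : R) := by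
    rw [← hcastA, ← map_pow, ZMod.pow_card, hcastA]
  have h2p : (2 : R) ^ p = 2 := by
    have h0 : ((2:ℤ) : ZMod p) ^ p = ((2:ℤ) : ZMod p) := ZMod.pow_card _
    have h2 := congrArg (AdjoinRoot.of q) h0
    rw [map_pow, hpow_int] at h2
    exact_mod_cast h2
  have hfrob : (2 : R) * α ^ p = (A : R) + (ℓ : R) * s := by
    have h1 : ((A : R) + s) ^ p = (A : R)^p + s^p := add_pow_char ((A:R)) s p
    have h2 : (A : R) + s = 2 * α := by rw [hs]; ring
    rw [h2, mul_pow, h2p, hAp, hsp] at h1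
    exact h1
  have hupow : α ^ p = (lucasU A B p : R) * α - (B : R) * (lucasU A B (p-1) : R) := by
    have := lucasU_pow A B α hα (p - 1)
    rwa [show p - 1 + 1 = p by omega] at this
  -- the master equation
  set c1 : ZMod p := ((2 * lucasU A B p - 2 * ℓ : ℤ) : ZMod p) with hc1
  set c0 : ZMod p := (((ℓ - 1) * A - 2 * B * lucasU A B (p-1) : ℤ) : ZMod p) with hc0
  have E : AdjoinRoot.of q c1 * AdjoinRoot.root q + AdjoinRoot.of q c0 = 0 := by
    rw [hc1, hc0, hpow_int, hpow_int, ← hαdef]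
    push_cast
    have hmul : ∀ x y : ℤ, ((x * y : ℤ) : R) = (x : R) * (y : R) := fun x y => map_mul (Int.castRingHom R) x y
    have hsub : ∀ x y : ℤ, ((x - y : ℤ) : R) = (x : R) - (y : R) := fun x y => map_sub (Int.castRingHom R) x y
    simp only [hmul, hsub]
    rw [hs] at hfrob
    linear_combination hfrob - 2 * hupow
  rw [hq] at E
  obtain ⟨e1, e0⟩ := coeff_ext a b c1 c0 E
  rw [hc1] at e1; rw [hc0] at e0
  push_cast at e1 e0
  have h2ne : (2 : ZMod p) ≠ 0 := two_ne_zero_zmod p hp2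
  constructor
  · have : (2 : ZMod p) * ((lucasU A B p : ZMod p) - (ℓ : ZMod p)) = 0 := by
      linear_combination e1
    rcases mul_eq_zero.mp this with h | h
    · exact absurd h h2ne
    · linear_combination h
  · linear_combination -e0

theorem prime_dvd_lucasU (A B : ℤ) (p : ℕ) [Fact p.Prime] (hp2 : p ≠ 2)
    (hB : ¬ (p : ℤ) ∣ B) :
    (p : ℤ) ∣ lucasU A B ((p : ℤ) - legendreSym p (A ^ 2 - 4 * B)).toNat := by
  have hp := (Fact.out : p.Prime)
  have hple := hp.two_le
  obtain ⟨h1, h2⟩ := key A B p hp2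
  have h2ne : (2 : ZMod p) ≠ 0 := two_ne_zero_zmod p hp2
  have hbne : (B : ZMod p) ≠ 0 := fun h => hB ((ZMod.intCast_zmod_eq_zero_iff_dvd B p).mp h)
  rw [← ZMod.intCast_zmod_eq_zero_iff_dvd]
  by_cases hΔ : ((A^2 - 4*B : ℤ) : ZMod p) = 0
  · have hl0 : legendreSym p (A^2-4*B) = 0 := (legendreSym.eq_zero_iff p _).mpr hΔ
    rw [hl0] at h1 ⊢
    have ht : ((p:ℤ) - 0).toNat = p := by omega
    rw [ht]
    push_cast at h1
    exact h1
  · rcases legendreSym.eq_one_or_neg_one p hΔ with hl | hl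
    · rw [hl] at h2 ⊢
      have ht : ((p:ℤ) - 1).toNat = p - 1 := by omega
      rw [ht]
      push_cast at h2
      have hbu : (B : ZMod p) * (lucasU A B (p-1) : ZMod p) = 0 :=
        mul_left_cancel₀ h2ne (by linear_combination h2)
      rcases mul_eq_zero.mp hbu with h | h
      · exact absurd h hbne
      · exact h
    · rw [hl] at h1 h2 ⊢
      have ht : ((p:ℤ) - (-1)).toNat = p + 1 := by omega
      rw [ht]
      push_cast at h1 h2
      have hrec : lucasU A B (p+1) = A * lucasU A B p - B * lucasU A B (p-1) := by
        have hpe : p + 1 = (p - 1) + 2 := by omega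
        rw [hpe, show lucasU A B ((p-1)+2) = A * lucasU A B ((p-1)+1) - B * lucasU A B (p-1) from rfl,
          show p - 1 + 1 = p by omega]
      rw [hrec]
      push_cast
      have hbu : (B : ZMod p) * (lucasU A B (p-1) : ZMod p) = -(A : ZMod p) :=
        mul_left_cancel₀ h2ne (by linear_combination h2)
      rw [h1, hbu]
      ring
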